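/- Let N ≥ 1 be an integer and let w : ℝ × (0,∞) → ℝ be a classical solution of the one-dimensional heat equation ∂_t w(s,t) = ∂_ss w(s,t) (with w twice continuously differentiable in s and once in t). Define u(r,t) = w(log r + (N−2)t, t) for r > 0, t > 0. Then u satisfies the radial form of the linear (m = 1) nonhomogeneous equation: r^{−2} ∂_t u(r,t) = ∂_rr u(r,t) + ((N−1)/r) ∂_r u(r,t) for all r > 0, t > 0. -/

import Mathlib

open Real Set Filter Topology

noncomputable section

/-- Total derivative of `τ ↦ w (a + c τ) τ` from continuous partial derivatives. -/
lemma hasDerivAt_comp_line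
    (w ws wt : ℝ → ℝ → ℝ)
    (hws : ∀ s t, HasDerivAt (fun σ => w σ t) (ws s t) s)
    (hwt : ∀ s t, HasDerivAt (fun τ => w s τ) (wt s t) t)
    (hwscont : Continuous (fun p : ℝ × ℝ => ws p.1 p.2))
    (hwtcont : Continuous (fun p : ℝ × ℝ => wt p.1 p.2))
    (a c t : ℝ) :
    HasDerivAt (fun τ => w (a + c * τ) τ)
      (c * ws (a + c * t) t + wt (a + c * t) t) t := by
  set s : ℝ := a + c * t with hs
  rw [hasDerivAt_iff_tendsto_slope]
  rw [Metric.tendsto_nhdsWithin_nhds]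
  intro ε hε
  have hε' : 0 < ε / (2 * (1 + |c|)) := by positivity
  obtain ⟨δ₁, hδ₁, Hwt⟩ := Metric.continuousAt_iff.1 (hwtcont.continuousAt (x := (s, t))) _ hε'
  obtain ⟨δ₂, hδ₂, Hws⟩ := Metric.continuousAt_iff.1 (hwscont.continuousAt (x := (s, t))) _ hε'
  refine ⟨min δ₁ δ₂ / (1 + |c|), by positivity, ?_⟩
  intro τ hτne hτ
  have hτt : |τ - t| < min δ₁ δ₂ / (1 + |c|) := by
    rwa [Real.dist_eq] at hτ
  have hne : τ - t ≠ 0 := sub_ne_zero.2 hτne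
  -- decomposition via FTC
  have hint1 : IntervalIntegrable (fun θ => wt (a + c * τ) θ) MeasureTheory.volume t τ :=
    (hwtcont.comp (continuous_const.prodMk continuous_id)).continuousOn.intervalIntegrable
  have hint2 : IntervalIntegrable (fun σ => ws σ t) MeasureTheory.volume s (a + c * τ) :=
    (hwscont.comp (continuous_id.prodMk continuous_const)).continuousOn.intervalIntegrable
  have habs : ∀ x y z : ℝ, x ∈ Set.uIoc y z → |x - y| ≤ |z - y| := by
    intro x y z hx
    rcases Set.mem_uIoc.1 hx with h | h
    · rw [abs_of_pos (by linarith [h.1, h.2]), abs_of_pos (by linarith [h.1, h.2])]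
      linarith [h.2]
    · rw [abs_of_nonpos (by linarith [h.1, h.2]), abs_of_neg (by linarith [h.1, h.2])]
      linarith [h.1]
  have hA : w (a + c * τ) τ - w (a + c * τ) t = ∫ θ in t..τ, wt (a + c * τ) θ := by
    rw [intervalIntegral.integral_eq_sub_of_hasDerivAt (fun θ _ => hwt _ θ) hint1]
  have hB : w (a + c * τ) t - w s t = ∫ σ in s..(a + c * τ), ws σ t := by
    rw [intervalIntegral.integral_eq_sub_of_hasDerivAt (fun σ _ => hws σ t) hint2]
  have key : w (a + c * τ) τ - w s t - (τ - t) * (c * ws s t + wt s t)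
      = (∫ θ in t..τ, (wt (a + c * τ) θ - wt s t))
        + (∫ σ in s..(a + c * τ), (ws σ t - ws s t)) := by
    rw [intervalIntegral.integral_sub hint1 intervalIntegrable_const,
        intervalIntegral.integral_sub hint2 intervalIntegrable_const,
        intervalIntegral.integral_const, intervalIntegral.integral_const]
    have : a + c * τ - s = c * (τ - t) := by rw [hs]; ring
    rw [this]
    simp only [smul_eq_mul]
    linarith [hA, hB]
  -- bounds
  have hbound1 : |∫ θ in t..τ, (wt (a + c * τ) θ - wt s t)| ≤ ε / (2 * (1 + |c|)) * |τ - t| := by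
    have := intervalIntegral.norm_integral_le_of_norm_le_const
      (C := ε / (2 * (1 + |c|))) (f := fun θ => wt (a + c * τ) θ - wt s t)
      (a := t) (b := τ) ?_
    · simpa [Real.norm_eq_abs] using this
    · intro θ hθ
      have hθt : |θ - t| < min δ₁ δ₂ / (1 + |c|) :=
        lt_of_le_of_lt (habs θ t τ hθ) hτt
      have hd : dist ((a + c * τ, θ)) ((s, t)) < δ₁ := by
        rw [Prod.dist_eq]
        apply max_lt
        · rw [Real.dist_eq]
          have h1 : a + c * τ - s = c * (τ - t) := by rw [hs]; ring
          rw [h1, abs_mul]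
          calc |c| * |τ - t| ≤ (1 + |c|) * |τ - t| := by
                apply mul_le_mul_of_nonneg_right _ (abs_nonneg _); linarith [abs_nonneg c]
            _ < (1 + |c|) * (min δ₁ δ₂ / (1 + |c|)) := by
                apply mul_lt_mul_of_pos_left hτt; positivity
            _ = min δ₁ δ₂ := by field_simp
            _ ≤ δ₁ := min_le_left _ _
        · rw [Real.dist_eq]
          calc |θ - t| < min δ₁ δ₂ / (1 + |c|) := hθt
            _ ≤ min δ₁ δ₂ := by
                apply div_le_self (le_of_lt (lt_min hδ₁ hδ₂)); linarith [abs_nonneg c]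
            _ ≤ δ₁ := min_le_left _ _
      have := Hwt hd
      rw [Real.dist_eq] at this
      exact le_of_lt this
  have hbound2 : |∫ σ in s..(a + c * τ), (ws σ t - ws s t)| ≤ ε / (2 * (1 + |c|)) * (|c| * |τ - t|) := by
    have := intervalIntegral.norm_integral_le_of_norm_le_const
      (C := ε / (2 * (1 + |c|))) (f := fun σ => ws σ t - ws s t)
      (a := s) (b := a + c * τ) ?_
    · have h1 : a + c * τ - s = c * (τ - t) := by rw [hs]; ring
      rw [Real.norm_eq_abs, h1, abs_mul] at this
      simpa [Real.norm_eq_abs] using this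
    · intro σ hσ
      have hσs : |σ - s| < δ₂ := by
        have hcb : |a + c * τ - s| < min δ₁ δ₂ := by
          have h1 : a + c * τ - s = c * (τ - t) := by rw [hs]; ring
          rw [h1, abs_mul]
          calc |c| * |τ - t| ≤ (1 + |c|) * |τ - t| := by
                apply mul_le_mul_of_nonneg_right _ (abs_nonneg _); linarith [abs_nonneg c]
            _ < (1 + |c|) * (min δ₁ δ₂ / (1 + |c|)) := by
                apply mul_lt_mul_of_pos_left hτt; positivity
            _ = min δ₁ δ₂ := by field_simp
        exact lt_of_le_of_lt (habs σ s (a + c * τ) hσ) (lt_of_lt_of_le hcb (min_le_right _ _))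
      have hd : dist ((σ, t)) ((s, t)) < δ₂ := by
        rw [Prod.dist_eq]
        apply max_lt
        · rwa [Real.dist_eq]
        · simpa using hδ₂
      have := Hws hd
      rw [Real.dist_eq] at this
      exact le_of_lt this
  -- conclude
  rw [Real.dist_eq]
  have hslope : slope (fun τ => w (a + c * τ) τ) t τ - (c * ws s t + wt s t)
      = (w (a + c * τ) τ - w s t - (τ - t) * (c * ws s t + wt s t)) / (τ - t) := by
    rw [slope_def_field]
    field_simp
    rw [hs]
  rw [hslope, key, abs_div]
  rw [div_lt_iff₀ (abs_pos.2 hne)]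
  calc |(∫ θ in t..τ, (wt (a + c * τ) θ - wt s t))
        + ∫ σ in s..(a + c * τ), (ws σ t - ws s t)|
      ≤ ε / (2 * (1 + |c|)) * |τ - t| + ε / (2 * (1 + |c|)) * (|c| * |τ - t|) :=
        le_trans (abs_add_le _ _) (add_le_add hbound1 hbound2)
    _ = ε / (2 * (1 + |c|)) * (1 + |c|) * |τ - t| := by ring
    _ = ε / 2 * |τ - t| := by
        have h1 : (1:ℝ) + |c| ≠ 0 := by positivity
        field_simp
    _ < ε * |τ - t| := by
        have : (0:ℝ) < |τ - t| := abs_pos.2 hne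
        nlinarith

/-- **Linear case `m = 1` (Eq. (2.2)-(2.3)).** Let `N ≥ 1` and let `w` be a classical
solution of the one-dimensional heat equation `∂ₜ w = ∂ₛₛ w` (given together with its
continuous partial derivatives `wₛ`, `wₛₛ`, `wₜ`).  Then `u(r,t) = w(log r + (N-2)t, t)`
satisfies the radial form of the linear nonhomogeneous equation
`r^{-2} ∂ₜ u = ∂ᵣᵣ u + ((N-1)/r) ∂ᵣ u` for all `r > 0`, `t > 0`. -/
theorem change_of_variables_linear
    (N : ℕ) (hN : 1 ≤ N)
    (w ws wss wt : ℝ → ℝ → ℝ)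
    (hws : ∀ s t, HasDerivAt (fun σ => w σ t) (ws s t) s)
    (hwss : ∀ s t, HasDerivAt (fun σ => ws σ t) (wss s t) s)
    (hwt : ∀ s t, HasDerivAt (fun τ => w s τ) (wt s t) t)
    (hwscont : Continuous (fun p : ℝ × ℝ => ws p.1 p.2))
    (hwsscont : Continuous (fun p : ℝ × ℝ => wss p.1 p.2))
    (hwtcont : Continuous (fun p : ℝ × ℝ => wt p.1 p.2))
    (hheat : ∀ s t : ℝ, 0 < t → wt s t = wss s t) :
    ∀ r t : ℝ, 0 < r → 0 < t →
      r ^ (-2 : ℝ) * deriv (fun τ => w (Real.log r + ((N : ℝ) - 2) * τ) τ) t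
        = iteratedDeriv 2 (fun ρ => w (Real.log ρ + ((N : ℝ) - 2) * t) t) r
          + (((N : ℝ) - 1) / r) * deriv (fun ρ => w (Real.log ρ + ((N : ℝ) - 2) * t) t) r := by

  intro r t hr ht
  set c : ℝ := (N : ℝ) - 2 with hc
  set s : ℝ := Real.log r + c * t with hs
  -- time derivative
  have htime : deriv (fun τ => w (Real.log r + c * τ) τ) t = c * ws s t + wt s t :=
    (hasDerivAt_comp_line w ws wt hws hwt hwscont hwtcont (Real.log r) c t).deriv
  -- first space derivative
  have hd1 : ∀ ρ : ℝ, 0 < ρ →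
      HasDerivAt (fun ρ => w (Real.log ρ + c * t) t) (ws (Real.log ρ + c * t) t * ρ⁻¹) ρ := by
    intro ρ hρ
    have hlog : HasDerivAt (fun ρ : ℝ => Real.log ρ + c * t) ρ⁻¹ ρ :=
      (Real.hasDerivAt_log hρ.ne').add_const _
    exact (hws (Real.log ρ + c * t) t).comp ρ hlog
  have hderiv1 : deriv (fun ρ => w (Real.log ρ + c * t) t) r = ws s t * r⁻¹ :=
    (hd1 r hr).deriv
  -- derivative function agrees with explicit formula near r
  have hev : (fun ρ => deriv (fun ρ => w (Real.log ρ + c * t) t) ρ)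
      =ᶠ[𝓝 r] (fun ρ => ws (Real.log ρ + c * t) t * ρ⁻¹) := by
    filter_upwards [eventually_gt_nhds hr] with ρ hρ
    exact (hd1 ρ hρ).deriv
  -- second space derivative
  have hg : HasDerivAt (fun ρ => ws (Real.log ρ + c * t) t * ρ⁻¹)
      (wss s t * r⁻¹ * r⁻¹ + ws s t * (-(r ^ 2)⁻¹)) r := by
    have hlog : HasDerivAt (fun ρ : ℝ => Real.log ρ + c * t) r⁻¹ r :=
      (Real.hasDerivAt_log hr.ne').add_const _
    exact ((hwss s t).comp r hlog).mul (hasDerivAt_inv hr.ne')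
  have hderiv2 : iteratedDeriv 2 (fun ρ => w (Real.log ρ + c * t) t) r
      = wss s t * r⁻¹ * r⁻¹ + ws s t * (-(r ^ 2)⁻¹) := by
    rw [show (2 : ℕ) = 1 + 1 from rfl, iteratedDeriv_succ, iteratedDeriv_one]
    rw [hev.deriv_eq]
    exact hg.deriv
  rw [htime, hderiv1, hderiv2, hheat s t ht]
  have hrpow : r ^ (-2 : ℝ) = (r ^ 2)⁻¹ := by
    rw [Real.rpow_neg hr.le, show (2 : ℝ) = ((2 : ℕ) : ℝ) by norm_num, Real.rpow_natCast]
  rw [hrpow, hc]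
  field_simp
  ring
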